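/- In the CBAG induction step with deterministic contractive compressor C of parameter α: if ‖H − ∇²fᵢ(x*)‖_F ≤ μ/(2√C₀) and ‖x' − x*‖ ≤ (1−√(1−α))μ/(4√C₀ L_F), then ‖H + C(∇²fᵢ(x') − H) − ∇²fᵢ(x*)‖_F ≤ √(1−α)‖H − ∇²fᵢ(x*)‖_F + 2L_F‖x' − x*‖ ≤ μ/(2√C₀). -/

import Mathlib

open Finset

/-- Squared Frobenius norm of a real `d × d` matrix. -/
def frobSq {d : ℕ} (X : Matrix (Fin d) (Fin d) ℝ) : ℝ := ∑ j, ∑ l, (X j l)^2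

private noncomputable def toE {d : ℕ} (X : Matrix (Fin d) (Fin d) ℝ) :
    EuclideanSpace ℝ (Fin d × Fin d) := WithLp.toLp 2 (fun p : Fin d × Fin d => X p.1 p.2)

private lemma norm_toE {d : ℕ} (X : Matrix (Fin d) (Fin d) ℝ) :
    ‖toE X‖ = Real.sqrt (frobSq X) := by
  rw [EuclideanSpace.norm_eq, frobSq]
  congr 1
  rw [Fintype.sum_prod_type]
  apply Finset.sum_congr rfl; intro j _
  apply Finset.sum_congr rfl; intro l _
  simp [toE, Real.norm_eq_abs, sq_abs]

private lemma frob_triangle {d : ℕ} (A B : Matrix (Fin d) (Fin d) ℝ) :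
    Real.sqrt (frobSq (A + B)) ≤ Real.sqrt (frobSq A) + Real.sqrt (frobSq B) := by
  have h : toE (A + B) = toE A + toE B := by
    ext p; simp [toE]
  rw [← norm_toE, ← norm_toE, ← norm_toE, h]
  exact norm_add_le _ _

theorem cbag_induction_step {d : ℕ} {E : Type*} [NormedAddCommGroup E]
    [NormedSpace ℝ E]
    (α μ C₀ LF : ℝ) (hα0 : 0 < α) (hα1 : α ≤ 1) (hμ : 0 < μ)
    (hC₀ : 0 < C₀) (hLF : 0 < LF)
    (C : Matrix (Fin d) (Fin d) ℝ → Matrix (Fin d) (Fin d) ℝ)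
    (hC : ∀ M, Real.sqrt (frobSq (C M - M)) ≤
      Real.sqrt (1 - α) * Real.sqrt (frobSq M))
    (Hess : E → Matrix (Fin d) (Fin d) ℝ)
    (hLip : ∀ a b, Real.sqrt (frobSq (Hess a - Hess b)) ≤ LF * ‖a - b‖)
    (H : Matrix (Fin d) (Fin d) ℝ) (x' xstar : E)
    (hH : Real.sqrt (frobSq (H - Hess xstar)) ≤ μ/(2*Real.sqrt C₀))
    (hx : ‖x' - xstar‖ ≤ (1 - Real.sqrt (1 - α)) * μ / (4 * Real.sqrt C₀ * LF)) :
    Real.sqrt (frobSq (H + C (Hess x' - H) - Hess xstar)) ≤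
        Real.sqrt (1 - α) * Real.sqrt (frobSq (H - Hess xstar))
          + 2*LF*‖x' - xstar‖ ∧
      Real.sqrt (1 - α) * Real.sqrt (frobSq (H - Hess xstar))
          + 2*LF*‖x' - xstar‖ ≤ μ/(2*Real.sqrt C₀) := by
  set s := Real.sqrt (1 - α) with hs
  have hs0 : 0 ≤ s := Real.sqrt_nonneg _
  have hs1 : s ≤ 1 := by
    rw [hs]
    exact Real.sqrt_le_one.mpr (by linarith)
  have hnxp : 0 ≤ ‖x' - xstar‖ := norm_nonneg _
  have hG : Real.sqrt (frobSq (Hess x' - Hess xstar)) ≤ LF * ‖x' - xstar‖ :=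
    hLip x' xstar
  have hGH : Real.sqrt (frobSq (Hess x' - H)) ≤
      Real.sqrt (frobSq (H - Hess xstar)) + LF * ‖x' - xstar‖ := by
    have heq : Hess x' - H = (Hess x' - Hess xstar) + -(H - Hess xstar) := by abel
    have hneg : frobSq (-(H - Hess xstar)) = frobSq (H - Hess xstar) := by
      unfold frobSq
      apply Finset.sum_congr rfl; intro j _
      apply Finset.sum_congr rfl; intro l _
      simp [Matrix.neg_apply, Matrix.sub_apply]; ring
    calc Real.sqrt (frobSq (Hess x' - H))
        ≤ Real.sqrt (frobSq (Hess x' - Hess xstar))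
          + Real.sqrt (frobSq (-(H - Hess xstar))) := by
          rw [heq]; exact frob_triangle _ _
      _ ≤ Real.sqrt (frobSq (H - Hess xstar)) + LF * ‖x' - xstar‖ := by
          rw [hneg]; linarith
  have hmain : Real.sqrt (frobSq (H + C (Hess x' - H) - Hess xstar)) ≤
      s * Real.sqrt (frobSq (H - Hess xstar)) + 2*LF*‖x' - xstar‖ := by
    have heq : H + C (Hess x' - H) - Hess xstar =
        (C (Hess x' - H) - (Hess x' - H)) + (Hess x' - Hess xstar) := by abel
    calc Real.sqrt (frobSq (H + C (Hess x' - H) - Hess xstar))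
        ≤ Real.sqrt (frobSq (C (Hess x' - H) - (Hess x' - H)))
          + Real.sqrt (frobSq (Hess x' - Hess xstar)) := by
          rw [heq]; exact frob_triangle _ _
      _ ≤ s * Real.sqrt (frobSq (Hess x' - H)) + LF * ‖x' - xstar‖ := by
          have := hC (Hess x' - H); linarith
      _ ≤ s * (Real.sqrt (frobSq (H - Hess xstar)) + LF * ‖x' - xstar‖)
          + LF * ‖x' - xstar‖ := by
          have := mul_le_mul_of_nonneg_left hGH hs0; linarith
      _ ≤ s * Real.sqrt (frobSq (H - Hess xstar)) + 2*LF*‖x' - xstar‖ := by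
          nlinarith [mul_nonneg (mul_nonneg (sub_nonneg.mpr hs1) hLF.le) hnxp]
  refine ⟨hmain, ?_⟩
  have hsc : 0 < Real.sqrt C₀ := Real.sqrt_pos.mpr hC₀
  have hx2 : 2*LF*‖x' - xstar‖ ≤ (1 - s) * μ / (2 * Real.sqrt C₀) := by
    have h4 : 0 < 4 * Real.sqrt C₀ * LF := by positivity
    rw [le_div_iff₀ h4] at hx
    rw [le_div_iff₀ (by positivity : (0:ℝ) < 2 * Real.sqrt C₀)]
    calc 2*LF*‖x' - xstar‖ * (2*Real.sqrt C₀)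
        = ‖x' - xstar‖ * (4 * Real.sqrt C₀ * LF) := by ring
      _ ≤ (1 - s) * μ := hx
  have hHs : s * Real.sqrt (frobSq (H - Hess xstar)) ≤ s * (μ/(2*Real.sqrt C₀)) :=
    mul_le_mul_of_nonneg_left hH hs0
  have : s * (μ/(2*Real.sqrt C₀)) + (1 - s) * μ / (2 * Real.sqrt C₀)
      = μ/(2*Real.sqrt C₀) := by field_simp; ring
  linarith
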